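/- Let G be an invertible symmetric real n×n matrix, N a real n×q matrix with −NᵀG⁻¹N = RᵀR for an invertible q×q matrix R, and M = R⁻ᵀNᵀG⁻¹. Let n⁺ ∈ ℝⁿ satisfy δ := n⁺ᵀH n⁺ < 0 where H = G⁻¹ + MᵀM, and set d₁ = M n⁺, d₂ = H n⁺, N₊ = [N n⁺]. Define the (q+1)×(q+1) matrix R₊ = [[R, −d₁],[0, √(−δ)]]. Then: (a) −N₊ᵀG⁻¹N₊ = R₊ᵀR₊; (b) R₊ is invertible with R₊⁻¹ = [[R⁻¹, R⁻¹d₁/√(−δ)],[0, 1/√(−δ)]]; (c) R₊⁻ᵀN₊ᵀG⁻¹ equals the matrix obtained by appending the row d₂ᵀ/√(−δ) below M. -/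

import Mathlib

open Matrix


lemma aux_of_mul_of (a b : ℝ) :
    (Matrix.of fun _ _ => a : Matrix Unit Unit ℝ) * (Matrix.of fun _ _ => b) =
      Matrix.of fun _ _ => a * b := by
  ext i j; simp [Matrix.mul_apply]

lemma aux_of_transpose (a : ℝ) :
    (Matrix.of fun _ _ => a : Matrix Unit Unit ℝ)ᵀ = Matrix.of fun _ _ => a := rfl

lemma aux_of_one : (Matrix.of fun _ _ => (1:ℝ) : Matrix Unit Unit ℝ) = 1 := by
  ext i j; simp [Matrix.one_apply, Subsingleton.elim i j]

lemma aux_neg_of (a : ℝ) :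
    -(Matrix.of fun _ _ => a : Matrix Unit Unit ℝ) = Matrix.of fun _ _ => -a := rfl

lemma aux_of_add (a b : ℝ) :
    (Matrix.of fun _ _ => a : Matrix Unit Unit ℝ) + (Matrix.of fun _ _ => b) =
      Matrix.of fun _ _ => a + b := rfl

lemma aux_col_mul_of {m : Type*} (v : m → ℝ) (a : ℝ) :
    Matrix.replicateCol Unit v * (Matrix.of fun _ _ => a : Matrix Unit Unit ℝ) =
      Matrix.replicateCol Unit (a • v) := by
  ext i j; simp [Matrix.mul_apply, mul_comm]

lemma aux_of_mul_row {m : Type*} (a : ℝ) (v : m → ℝ) :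
    (Matrix.of fun _ _ => a : Matrix Unit Unit ℝ) * Matrix.replicateRow Unit v =
      Matrix.replicateRow Unit (a • v) := by
  ext i j; simp [Matrix.mul_apply]

lemma aux_col_neg {m : Type*} (v : m → ℝ) :
    Matrix.replicateCol Unit (-v) = -Matrix.replicateCol Unit v := rfl

lemma aux_row_neg {m : Type*} (v : m → ℝ) :
    Matrix.replicateRow Unit (-v) = -Matrix.replicateRow Unit v := rfl

lemma aux_col_smul {m : Type*} (a : ℝ) (v : m → ℝ) :
    Matrix.replicateCol Unit (a • v) = a • Matrix.replicateCol Unit v := rfl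

lemma aux_row_add {m : Type*} (v w : m → ℝ) :
    Matrix.replicateRow Unit (v + w) = Matrix.replicateRow Unit v + Matrix.replicateRow Unit w := rfl

/-- Updating the Cholesky-type factorization when a constraint is added: with
`δ = n⁺ᵀH n⁺ < 0`, `d₁ = M n⁺`, `d₂ = H n⁺`, the matrix
`R₊ = [[R, −d₁],[0, √(−δ)]]` satisfies `−N₊ᵀG⁻¹N₊ = R₊ᵀR₊`, is invertible with the
stated triangular inverse, and `R₊⁻ᵀN₊ᵀG⁻¹` is `M` with the row `d₂ᵀ/√(−δ)` appended. -/
theorem stmt_17 {n q : ℕ} (G : Matrix (Fin n) (Fin n) ℝ)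
    (hGsym : G.IsSymm) (hG : IsUnit G.det)
    (N : Matrix (Fin n) (Fin q) ℝ)
    (R : Matrix (Fin q) (Fin q) ℝ) (hR : IsUnit R.det)
    (hRR : -(Nᵀ * G⁻¹ * N) = Rᵀ * R)
    (M : Matrix (Fin q) (Fin n) ℝ) (hM : M = Rᵀ⁻¹ * Nᵀ * G⁻¹)
    (H : Matrix (Fin n) (Fin n) ℝ) (hH : H = G⁻¹ + Mᵀ * M)
    (nplus : Fin n → ℝ)
    (δ : ℝ) (hδ : δ = nplus ⬝ᵥ H *ᵥ nplus) (hδneg : δ < 0)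
    (d₁ : Fin q → ℝ) (hd₁ : d₁ = M *ᵥ nplus)
    (d₂ : Fin n → ℝ) (hd₂ : d₂ = H *ᵥ nplus)
    (Nplus : Matrix (Fin n) (Fin q ⊕ Unit) ℝ)
    (hNplus : Nplus = Matrix.fromCols N (Matrix.replicateCol Unit nplus))
    (Rplus : Matrix (Fin q ⊕ Unit) (Fin q ⊕ Unit) ℝ)
    (hRplus : Rplus = Matrix.fromBlocks R (Matrix.replicateCol Unit (-d₁)) 0
      (Matrix.of fun _ _ => Real.sqrt (-δ))) :
    -(Nplusᵀ * G⁻¹ * Nplus) = Rplusᵀ * Rplus ∧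
    IsUnit Rplus.det ∧
    Rplus⁻¹ = Matrix.fromBlocks R⁻¹
      (Matrix.replicateCol Unit ((Real.sqrt (-δ))⁻¹ • (R⁻¹ *ᵥ d₁))) 0
      (Matrix.of fun _ _ => (Real.sqrt (-δ))⁻¹) ∧
    Rplusᵀ⁻¹ * Nplusᵀ * G⁻¹ =
      Matrix.fromRows M (Matrix.replicateRow Unit ((Real.sqrt (-δ))⁻¹ • d₂)) := by
  set s : ℝ := Real.sqrt (-δ) with hs
  have hs2 : s * s = -δ := Real.mul_self_sqrt (by linarith)
  have hs0 : s ≠ 0 := by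
    rw [hs, Real.sqrt_ne_zero']; linarith
  have hRT : IsUnit Rᵀ.det := by rwa [Matrix.det_transpose]
  have hGi : G⁻¹ᵀ = G⁻¹ := by rw [Matrix.transpose_nonsing_inv, hGsym.eq]
  have hNG : Nᵀ * G⁻¹ = Rᵀ * M := by
    rw [hM, ← Matrix.mul_assoc, ← Matrix.mul_assoc, Matrix.mul_nonsing_inv _ hRT,
      Matrix.one_mul]
  have hNGv : (Nᵀ * G⁻¹) *ᵥ nplus = Rᵀ *ᵥ d₁ := by
    rw [hNG, hd₁, ← Matrix.mulVec_mulVec]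
  have hvG : nplus ᵥ* G⁻¹ = G⁻¹ *ᵥ nplus := by
    conv_lhs => rw [← hGi]
    rw [Matrix.vecMul_transpose]
  have hMM : nplus ⬝ᵥ (Mᵀ * M) *ᵥ nplus = d₁ ⬝ᵥ d₁ := by
    rw [← Matrix.mulVec_mulVec, Matrix.dotProduct_mulVec, Matrix.vecMul_transpose, ← hd₁]
  have hδ' : nplus ⬝ᵥ G⁻¹ *ᵥ nplus = δ - d₁ ⬝ᵥ d₁ := by
    rw [hδ, hH, Matrix.add_mulVec, dotProduct_add, hMM]; ring
  have hd₂' : d₂ = G⁻¹ *ᵥ nplus + Mᵀ *ᵥ d₁ := by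
    rw [hd₂, hH, Matrix.add_mulVec, hd₁, Matrix.mulVec_mulVec]
  -- the LHS of (a) as a block matrix
  have hNtG : Nplusᵀ * G⁻¹ = fromRows (Nᵀ * G⁻¹) (Matrix.replicateRow Unit (G⁻¹ *ᵥ nplus)) := by
    rw [hNplus, transpose_fromCols, transpose_replicateCol, fromRows_mul,
      ← Matrix.replicateRow_vecMul, hvG]
  have ha : Nplusᵀ * G⁻¹ * Nplus =
      fromBlocks (Nᵀ * G⁻¹ * N) (Matrix.replicateCol Unit (Rᵀ *ᵥ d₁))
        (Matrix.replicateRow Unit (Rᵀ *ᵥ d₁)) (Matrix.of fun _ _ => δ - d₁ ⬝ᵥ d₁) := by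
    rw [hNtG, hNplus, fromRows_mul_fromCols]
    rw [Matrix.fromBlocks_inj]
    refine ⟨rfl, ?_, ?_, ?_⟩
    · rw [← Matrix.replicateCol_mulVec, hNGv]
    · rw [← Matrix.replicateRow_vecMul, ← Matrix.mulVec_transpose, Matrix.mulVec_mulVec, hNGv]
    · rw [Matrix.replicateRow_mul_replicateCol]
      congr 1
      funext _ _
      rw [dotProduct_comm, hδ']
  have hRpT : Rplusᵀ = fromBlocks Rᵀ 0 (Matrix.replicateRow Unit (-d₁))
      (Matrix.of fun _ _ => s) := by
    rw [hRplus, fromBlocks_transpose, transpose_replicateCol, transpose_zero, aux_of_transpose]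
  have haeq : -(Nplusᵀ * G⁻¹ * Nplus) = Rplusᵀ * Rplus := by
    rw [ha, hRpT, hRplus, fromBlocks_multiply, Matrix.fromBlocks_neg]
    rw [Matrix.fromBlocks_inj]
    refine ⟨by rw [hRR]; simp, ?_, ?_, ?_⟩
    · rw [Matrix.zero_mul, add_zero, ← Matrix.replicateCol_mulVec, Matrix.mulVec_neg,
        aux_col_neg]
    · rw [Matrix.mul_zero, add_zero, ← Matrix.replicateRow_vecMul, neg_vecMul,
        ← Matrix.mulVec_transpose, aux_row_neg]
    · rw [aux_col_neg, Matrix.mul_neg, Matrix.replicateRow_mul_replicateCol, aux_of_mul_of, aux_neg_of,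
        aux_neg_of, hs2, aux_of_add]
      congr 1; funext _ _; rw [neg_dotProduct]; ring
  have hinv : Rplus * Matrix.fromBlocks R⁻¹
      (Matrix.replicateCol Unit (s⁻¹ • (R⁻¹ *ᵥ d₁))) 0 (Matrix.of fun _ _ => s⁻¹) = 1 := by
    rw [hRplus, fromBlocks_multiply]
    simp only [Matrix.mul_zero, Matrix.zero_mul, add_zero, zero_add]
    rw [Matrix.mul_nonsing_inv _ hR, aux_of_mul_of, mul_inv_cancel₀ hs0, aux_of_one,
      ← Matrix.replicateCol_mulVec, aux_col_mul_of, Matrix.mulVec_smul, Matrix.mulVec_mulVec,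
      Matrix.mul_nonsing_inv _ hR, Matrix.one_mulVec, smul_neg, aux_col_neg,
      add_neg_cancel, ← Matrix.fromBlocks_one]
  have hRpdet : IsUnit Rplus.det := Matrix.isUnit_det_of_right_inverse hinv
  have hRpinv : Rplus⁻¹ = Matrix.fromBlocks R⁻¹
      (Matrix.replicateCol Unit (s⁻¹ • (R⁻¹ *ᵥ d₁))) 0 (Matrix.of fun _ _ => s⁻¹) :=
    Matrix.inv_eq_right_inv hinv
  refine ⟨haeq, hRpdet, hRpinv, ?_⟩
  have hRpTinv : Rplusᵀ⁻¹ = fromBlocks R⁻¹ᵀ 0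
      (Matrix.replicateRow Unit (s⁻¹ • (R⁻¹ *ᵥ d₁))) (Matrix.of fun _ _ => s⁻¹) := by
    rw [← Matrix.transpose_nonsing_inv, hRpinv, fromBlocks_transpose, transpose_replicateCol,
      transpose_zero, aux_of_transpose]
  rw [Matrix.mul_assoc, hRpTinv, hNtG, fromBlocks_mul_fromRows]
  rw [Matrix.zero_mul, add_zero, hNG, ← Matrix.mul_assoc, Matrix.transpose_nonsing_inv,
    Matrix.nonsing_inv_mul _ hRT, Matrix.one_mul]
  congr 1
  rw [← Matrix.replicateRow_vecMul, aux_of_mul_row, ← aux_row_add]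
  congr 1
  rw [Matrix.smul_vecMul, ← Matrix.vecMul_vecMul, Matrix.vecMul_transpose,
    Matrix.mulVec_mulVec, Matrix.mul_nonsing_inv _ hR, Matrix.one_mulVec,
    ← Matrix.mulVec_transpose, hd₂', smul_add]
  ring_nf
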